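/- Let A ∈ ℝ^{n×d} be a matrix of rank r, let j ≥ 0 be an integer with r + j + 1 ≤ d, and let L be an (r+j+1)-dimensional linear subspace of ℝ^d containing all row vectors A_{i*}, 1 ≤ i ≤ n. Then for every affine j-dimensional subspace V of ℝ^d there is an affine j-dimensional subspace V' ⊆ L such that dist(A_{i*}, V) = dist(A_{i*}, V') for every i ∈ {1,…,n}. -/

import Mathlib

open Matrix

/-- Identify a plain vector in `Fin d → ℝ` with a point of Euclidean space `ℝ^d`. -/
noncomputable def toEuc {d : ℕ} (v : Fin d → ℝ) : EuclideanSpace ℝ (Fin d) :=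
  (WithLp.equiv 2 (Fin d → ℝ)).symm v

/-- Squared Euclidean distance from a point (given as a row vector) to a set. -/
noncomputable def rowDistSq {d : ℕ} (p : Fin d → ℝ) (C : Set (EuclideanSpace ℝ (Fin d))) : ℝ :=
  (Metric.infDist (toEuc p) C) ^ 2

/-- `dist²(A, C)`: sum of squared Euclidean distances of the rows of `A` to the set `C`. -/
noncomputable def matDistSq {n d : ℕ} (A : Matrix (Fin n) (Fin d) ℝ)
    (C : Set (EuclideanSpace ℝ (Fin d))) : ℝ :=
  ∑ i, rowDistSq (A i) C

/-- Squared Frobenius norm of a matrix. -/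
noncomputable def frobSq {n d : ℕ} (A : Matrix (Fin n) (Fin d) ℝ) : ℝ :=
  ∑ i, ∑ j, (A i j) ^ 2

/-- `C` is an affine `j`-dimensional subspace of `ℝ^d`. -/
def IsAffineSub (d j : ℕ) (C : Set (EuclideanSpace ℝ (Fin d))) : Prop :=
  ∃ (p : EuclideanSpace ℝ (Fin d)) (L : Submodule ℝ (EuclideanSpace ℝ (Fin d))),
    Module.finrank ℝ L = j ∧ C = (fun x => p + x) '' (L : Set (EuclideanSpace ℝ (Fin d)))

/-- `C` is a union of `k` affine `j`-dimensional subspaces of `ℝ^d`. -/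
def IsKAffineUnion (d j k : ℕ) (C : Set (EuclideanSpace ℝ (Fin d))) : Prop :=
  ∃ f : Fin k → Set (EuclideanSpace ℝ (Fin d)),
    (∀ i, IsAffineSub d j (f i)) ∧ C = ⋃ i, f i

/-- let `A ∈ ℝ^{n×d}` have rank `r`, let `r + j + 1 ≤ d`, and let `L` be
an `(r+j+1)`-dimensional linear subspace containing all rows of `A`.  Then for every affine
`j`-dimensional subspace `V` of `ℝ^d` there is an affine `j`-dimensional subspace `V' ⊆ L`
with `dist(A_{i*}, V) = dist(A_{i*}, V')` for all `i`. -/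
theorem stmt13 {n d r j : ℕ} (A : Matrix (Fin n) (Fin d) ℝ) (hrank : A.rank = r)
    (hdim : r + j + 1 ≤ d)
    (L : Submodule ℝ (EuclideanSpace ℝ (Fin d)))
    (hL : Module.finrank ℝ L = r + j + 1)
    (hrows : ∀ i, toEuc (A i) ∈ L)
    (V : Set (EuclideanSpace ℝ (Fin d))) (hV : IsAffineSub d j V) :
    ∃ V' : Set (EuclideanSpace ℝ (Fin d)), IsAffineSub d j V' ∧
      V' ⊆ (L : Set (EuclideanSpace ℝ (Fin d))) ∧
      ∀ i, Metric.infDist (toEuc (A i)) V = Metric.infDist (toEuc (A i)) V' := by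
  classical
  obtain ⟨p, W, hWj, hVeq⟩ := hV
  -- the row space of `A` inside Euclidean space
  set R : Submodule ℝ (EuclideanSpace ℝ (Fin d)) :=
    Submodule.span ℝ (Set.range fun i => toEuc (A i)) with hRdef
  have hRL : R ≤ L := Submodule.span_le.2 (Set.range_subset_iff.2 hrows)
  have hRr : Module.finrank ℝ R ≤ r := by
    have hmap : R = Submodule.map ((WithLp.linearEquiv 2 ℝ (Fin d → ℝ)).symm :
        (Fin d → ℝ) →ₗ[ℝ] EuclideanSpace ℝ (Fin d)) (Submodule.span ℝ (Set.range A.row)) := by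
      rw [hRdef, Submodule.map_span]
      congr 1
      rw [← Set.range_comp]
      rfl
    rw [hmap, LinearEquiv.finrank_map_eq, ← Matrix.rank_eq_finrank_span_row, hrank]
  -- the subspace generated by everything in sight
  set U : Submodule ℝ (EuclideanSpace ℝ (Fin d)) := R ⊔ W ⊔ Submodule.span ℝ {p} with hUdef
  have hRU : R ≤ U := le_trans le_sup_left le_sup_left
  have hWU : W ≤ U := le_trans le_sup_right le_sup_left
  have hpU : p ∈ U := by
    rw [hUdef]
    exact (le_sup_right : Submodule.span ℝ {p} ≤ _) (Submodule.mem_span_singleton_self p)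
  have hp1 : Module.finrank ℝ (Submodule.span ℝ ({p} : Set (EuclideanSpace ℝ (Fin d)))) ≤ 1 := by
    by_cases hp : p = 0
    · rw [hp, Submodule.span_zero_singleton]
      simp
    · rw [finrank_span_singleton hp]
  have hUdim : Module.finrank ℝ U ≤ r + j + 1 := by
    have h1 := Submodule.finrank_add_le_finrank_add_finrank (R ⊔ W) (Submodule.span ℝ {p})
    have h2 := Submodule.finrank_add_le_finrank_add_finrank R W
    rw [hWj] at h2
    rw [hUdef]
    omega
  -- comparison of orthogonal complements inside `U` and `L`
  set RU : Submodule ℝ (EuclideanSpace ℝ (Fin d)) := Rᗮ ⊓ U with hRUdef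
  set RL : Submodule ℝ (EuclideanSpace ℝ (Fin d)) := Rᗮ ⊓ L with hRLdef
  have hdU : Module.finrank ℝ R + Module.finrank ℝ RU = Module.finrank ℝ U :=
    Submodule.finrank_add_inf_finrank_orthogonal hRU
  have hdL : Module.finrank ℝ R + Module.finrank ℝ RL = Module.finrank ℝ L :=
    Submodule.finrank_add_inf_finrank_orthogonal hRL
  have hle : Module.finrank ℝ RU ≤ Module.finrank ℝ RL := by
    rw [hL] at hdL; omega
  -- a linear isometry `RU →ₗᵢ RL`
  set bU := stdOrthonormalBasis ℝ RU
  set bL := stdOrthonormalBasis ℝ RL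
  have hbU : Orthonormal ℝ (⇑bU.toBasis) := by
    rw [bU.coe_toBasis]; exact bU.orthonormal
  set f : Fin (Module.finrank ℝ RU) → RL := fun k => bL (Fin.castLE hle k) with hfdef
  have hf : Orthonormal ℝ f := bL.orthonormal.comp _ (Fin.castLE_injective hle)
  set T0 : RU →ₗ[ℝ] RL := bU.toBasis.constr ℝ f with hT0def
  have hT0 : Orthonormal ℝ (⇑T0 ∘ ⇑bU.toBasis) := by
    have he : (⇑T0 ∘ ⇑bU.toBasis) = f := by
      funext k
      simp only [Function.comp_apply, hT0def, Module.Basis.constr_basis]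
    rw [he]; exact hf
  set ι : RU →ₗᵢ[ℝ] RL := T0.isometryOfOrthonormal hbU hT0 with hιdef
  have hιcoe : ∀ x : RU, ι x = T0 x := fun x => rfl
  -- the decomposition of elements of `U`
  have hRperp : R ≤ RUᗮ := by
    refine le_trans R.le_orthogonal_orthogonal (Submodule.orthogonal_le ?_)
    exact inf_le_left
  have hdecomp : ∀ u : U,
      ((Submodule.orthogonalProjectionOnto RU (u : EuclideanSpace ℝ (Fin d)) : RU) : EuclideanSpace ℝ (Fin d))
        = (u : EuclideanSpace ℝ (Fin d)) -
          (Submodule.orthogonalProjectionOnto R (u : EuclideanSpace ℝ (Fin d)) : EuclideanSpace ℝ (Fin d)) := by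
    intro u
    apply Submodule.eq_starProjection_of_mem_orthogonal
    · refine Submodule.mem_inf.2 ⟨Submodule.sub_starProjection_mem_orthogonal _, ?_⟩
      exact U.sub_mem u.2 (hRU (Submodule.orthogonalProjectionOnto R (u : EuclideanSpace ℝ (Fin d))).2)
    · rw [sub_sub_cancel]
      exact hRperp (Submodule.orthogonalProjectionOnto R (u : EuclideanSpace ℝ (Fin d))).2
  -- the isometry `ψ : U →ₗᵢ E`
  set M : U →ₗ[ℝ] EuclideanSpace ℝ (Fin d) :=
    R.subtype ∘ₗ (Submodule.orthogonalProjectionOnto R).toLinearMap ∘ₗ U.subtype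
      + RL.subtype ∘ₗ ι.toLinearMap ∘ₗ (Submodule.orthogonalProjectionOnto RU).toLinearMap ∘ₗ U.subtype
      with hMdef
  have hMapp : ∀ u : U, M u =
      ((Submodule.orthogonalProjectionOnto R (u : EuclideanSpace ℝ (Fin d)) : R) : EuclideanSpace ℝ (Fin d))
      + ((ι (Submodule.orthogonalProjectionOnto RU (u : EuclideanSpace ℝ (Fin d))) : RL) :
          EuclideanSpace ℝ (Fin d)) := by
    intro u; rfl
  have hRLperp : (RL : Set (EuclideanSpace ℝ (Fin d))) ⊆ (Rᗮ : Set (EuclideanSpace ℝ (Fin d))) :=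
    inf_le_left
  have Mnorm : ∀ u : U, ‖M u‖ = ‖u‖ := by
    intro u
    have horth : (inner ℝ
        ((Submodule.orthogonalProjectionOnto R (u : EuclideanSpace ℝ (Fin d)) : R) : EuclideanSpace ℝ (Fin d))
        ((ι (Submodule.orthogonalProjectionOnto RU (u : EuclideanSpace ℝ (Fin d))) : RL) :
          EuclideanSpace ℝ (Fin d)) : ℝ) = 0 := by
      refine Submodule.inner_right_of_mem_orthogonal
        (Submodule.orthogonalProjectionOnto R (u : EuclideanSpace ℝ (Fin d))).2 ?_
      exact hRLperp (ι (Submodule.orthogonalProjectionOnto RU (u : EuclideanSpace ℝ (Fin d)))).2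
    have horth2 : (inner ℝ
        ((Submodule.orthogonalProjectionOnto R (u : EuclideanSpace ℝ (Fin d)) : R) : EuclideanSpace ℝ (Fin d))
        ((Submodule.orthogonalProjectionOnto RU (u : EuclideanSpace ℝ (Fin d)) : RU) :
          EuclideanSpace ℝ (Fin d)) : ℝ) = 0 := by
      refine Submodule.inner_right_of_mem_orthogonal
        (Submodule.orthogonalProjectionOnto R (u : EuclideanSpace ℝ (Fin d))).2 ?_
      exact (Submodule.mem_inf.1
        (Submodule.orthogonalProjectionOnto RU (u : EuclideanSpace ℝ (Fin d))).2).1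
    have hu : (u : EuclideanSpace ℝ (Fin d)) =
        ((Submodule.orthogonalProjectionOnto R (u : EuclideanSpace ℝ (Fin d)) : R) : EuclideanSpace ℝ (Fin d))
        + ((Submodule.orthogonalProjectionOnto RU (u : EuclideanSpace ℝ (Fin d)) : RU) :
            EuclideanSpace ℝ (Fin d)) := by
      rw [hdecomp u]; abel
    have hsq : ‖M u‖ ^ 2 = ‖(u : EuclideanSpace ℝ (Fin d))‖ ^ 2 := by
      rw [hMapp u, norm_add_sq_real, horth,
        show ‖(u : EuclideanSpace ℝ (Fin d))‖ = ‖((Submodule.orthogonalProjectionOnto R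
          (u : EuclideanSpace ℝ (Fin d)) : R) : EuclideanSpace ℝ (Fin d))
          + ((Submodule.orthogonalProjectionOnto RU (u : EuclideanSpace ℝ (Fin d)) : RU) :
              EuclideanSpace ℝ (Fin d))‖ from by rw [← hu],
        norm_add_sq_real, horth2]
      have : ‖((ι (Submodule.orthogonalProjectionOnto RU (u : EuclideanSpace ℝ (Fin d))) : RL) :
          EuclideanSpace ℝ (Fin d))‖ = ‖((Submodule.orthogonalProjectionOnto RU
          (u : EuclideanSpace ℝ (Fin d)) : RU) : EuclideanSpace ℝ (Fin d))‖ := by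
        rw [show ‖((ι (Submodule.orthogonalProjectionOnto RU (u : EuclideanSpace ℝ (Fin d))) : RL) :
            EuclideanSpace ℝ (Fin d))‖ = ‖ι (Submodule.orthogonalProjectionOnto RU
            (u : EuclideanSpace ℝ (Fin d)))‖ from rfl, ι.norm_map]
        rfl
      rw [this]
    have h1 := congrArg Real.sqrt hsq
    rwa [Real.sqrt_sq (norm_nonneg _), Real.sqrt_sq (norm_nonneg _)] at h1
  set ψ : U →ₗᵢ[ℝ] EuclideanSpace ℝ (Fin d) := ⟨M, Mnorm⟩ with hψdef
  set Φ := ψ.extend with hΦdef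
  have hΦapp : ∀ (x : EuclideanSpace ℝ (Fin d)) (hx : x ∈ U), Φ x = M (⟨x, hx⟩ : U) := by
    intro x hx
    exact ψ.extend_apply ⟨x, hx⟩
  -- Φ fixes R pointwise
  have hΦfix : ∀ x ∈ R, Φ x = x := by
    intro x hx
    rw [hΦapp x (hRU hx), hMapp]
    have h1 : ((Submodule.orthogonalProjectionOnto R ((⟨x, hRU hx⟩ : U) : EuclideanSpace ℝ (Fin d)) : R) :
        EuclideanSpace ℝ (Fin d)) = x := Submodule.starProjection_eq_self_iff.2 hx
    have h2 : Submodule.orthogonalProjectionOnto RU ((⟨x, hRU hx⟩ : U) : EuclideanSpace ℝ (Fin d)) = 0 :=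
      Submodule.orthogonalProjectionOnto_apply_of_mem_orthogonal (hRperp hx)
    rw [h1, h2, map_zero]
    simp
  -- Φ maps U into L
  have hΦL : ∀ x ∈ U, Φ x ∈ L := by
    intro x hx
    rw [hΦapp x hx, hMapp]
    refine L.add_mem (hRL (Submodule.orthogonalProjectionOnto R _).2) ?_
    exact (Submodule.mem_inf.1 (ι (Submodule.orthogonalProjectionOnto RU _)).2).2
  -- the candidate subspace
  refine ⟨⇑Φ '' V, ?_, ?_, ?_⟩
  · refine ⟨Φ p, W.map Φ.toLinearMap, ?_, ?_⟩
    · rw [(Submodule.equivMapOfInjective Φ.toLinearMap Φ.injective W).finrank_eq.symm, hWj]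
    · rw [hVeq, ← Set.image_comp]
      ext y
      simp only [Set.mem_image, Function.comp_apply, Submodule.mem_map, SetLike.mem_coe]
      constructor
      · rintro ⟨w, hw, rfl⟩
        exact ⟨Φ w, ⟨w, hw, rfl⟩, by simp [map_add]⟩
      · rintro ⟨z, ⟨w, hw, rfl⟩, rfl⟩
        exact ⟨w, hw, by simp [map_add]⟩
  · rintro y ⟨v, hv, rfl⟩
    rw [hVeq] at hv
    obtain ⟨w, hw, rfl⟩ := hv
    exact hΦL _ (U.add_mem hpU (hWU hw))
  · intro i
    have hfix : Φ (toEuc (A i)) = toEuc (A i) :=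
      hΦfix _ (Submodule.subset_span ⟨i, rfl⟩)
    rw [← Metric.infDist_image Φ.isometry (x := toEuc (A i)) (t := V), hfix]
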